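/- With unit-norm embeddings, |N_u| = d_u ≤ d_max, |N_u^-| = K, and L⁻_BPR, L⁻_COLES as above, one has L⁻_BPR ≤ (d_max/2)·ln(2e²/(e²+1))·(2K n_u − L⁻_COLES/2) + d_max·K·n_u·ln(e + 1/e). -/

import Mathlib

open scoped RealInnerProductSpace

lemma chord_aux : ConvexOn ℝ Set.univ (fun x : ℝ => Real.log (Real.exp 1 + Real.exp x)) := by
  set f : ℝ → ℝ := fun x => Real.log (Real.exp 1 + Real.exp x) with hf
  have hpos : ∀ x : ℝ, 0 < Real.exp 1 + Real.exp x := fun x => by positivity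
  have h1 : ∀ x : ℝ, HasDerivAt f (Real.exp x / (Real.exp 1 + Real.exp x)) x := by
    intro x
    exact ((Real.hasDerivAt_exp x).const_add (Real.exp 1)).log (hpos x).ne'
  have hderiv : deriv f = fun x => Real.exp x / (Real.exp 1 + Real.exp x) := by
    funext x; exact (h1 x).deriv
  have h2 : ∀ x : ℝ, HasDerivAt (deriv f)
      ((Real.exp x * (Real.exp 1 + Real.exp x) - Real.exp x * Real.exp x) /
        (Real.exp 1 + Real.exp x) ^ 2) x := by
    intro x
    rw [hderiv]
    exact (Real.hasDerivAt_exp x).div ((Real.hasDerivAt_exp x).const_add (Real.exp 1))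
      (hpos x).ne'
  apply convexOn_univ_of_deriv2_nonneg
  · exact fun x => (h1 x).differentiableAt
  · exact fun x => (h2 x).differentiableAt
  · intro x
    have : deriv^[2] f x = (Real.exp x * (Real.exp 1 + Real.exp x) -
        Real.exp x * Real.exp x) / (Real.exp 1 + Real.exp x) ^ 2 := by
      simp only [Function.iterate_succ, Function.iterate_zero, Function.comp_apply, id_eq]
      exact (h2 x).deriv
    rw [this]
    have h3 := Real.exp_pos x
    have h4 := Real.exp_pos (1 : ℝ)
    have : Real.exp x * (Real.exp 1 + Real.exp x) - Real.exp x * Real.exp x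
        = Real.exp x * Real.exp 1 := by ring
    rw [this]
    positivity

lemma chord_ineq {x y : ℝ} (hy : y ≤ 1) (hx1 : -1 ≤ x) (hx2 : x ≤ 1) :
    Real.log (Real.exp y + Real.exp x) ≤
      1 / 2 * Real.log (2 * Real.exp 1 ^ 2 / (Real.exp 1 ^ 2 + 1)) * (x + 1)
        + Real.log (Real.exp 1 + 1 / Real.exp 1) := by
  have hpos : (0:ℝ) < Real.exp y + Real.exp x := by positivity
  have step1 : Real.log (Real.exp y + Real.exp x) ≤
      Real.log (Real.exp 1 + Real.exp x) :=
    Real.log_le_log hpos (by have := Real.exp_le_exp.mpr hy; linarith)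
  have ha : (0:ℝ) ≤ (1 - x) / 2 := by linarith
  have hb : (0:ℝ) ≤ (1 + x) / 2 := by linarith
  have hab : (1 - x) / 2 + (1 + x) / 2 = 1 := by ring
  have hchord := chord_aux.2 (Set.mem_univ (-1 : ℝ)) (Set.mem_univ (1 : ℝ)) ha hb hab
  simp only [smul_eq_mul] at hchord
  have hx : (1 - x) / 2 * (-1) + (1 + x) / 2 * 1 = x := by ring
  rw [hx] at hchord
  have e1 : Real.exp 1 + Real.exp (-1 : ℝ) = Real.exp 1 + 1 / Real.exp 1 := by
    rw [Real.exp_neg]; rw [one_div]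
  have e2 : Real.exp 1 + Real.exp (1 : ℝ) = 2 * Real.exp 1 := by ring
  rw [e1, e2] at hchord
  have hc : Real.log (2 * Real.exp 1 ^ 2 / (Real.exp 1 ^ 2 + 1))
      = Real.log (2 * Real.exp 1) - Real.log (Real.exp 1 + 1 / Real.exp 1) := by
    rw [← Real.log_div (by positivity) (by positivity)]
    congr 1
    have h := (Real.exp_pos 1).ne'
    field_simp
  calc Real.log (Real.exp y + Real.exp x) ≤ Real.log (Real.exp 1 + Real.exp x) := step1
    _ ≤ (1 - x) / 2 * Real.log (Real.exp 1 + 1 / Real.exp 1)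
        + (1 + x) / 2 * Real.log (2 * Real.exp 1) := hchord
    _ = 1 / 2 * Real.log (2 * Real.exp 1 ^ 2 / (Real.exp 1 ^ 2 + 1)) * (x + 1)
        + Real.log (Real.exp 1 + 1 / Real.exp 1) := by rw [hc]; ring

theorem stmt_8 {d nu : ℕ} {I : Type*}
    (eU : Fin nu → EuclideanSpace ℝ (Fin d)) (eI : I → EuclideanSpace ℝ (Fin d))
    (hU : ∀ u, ‖eU u‖ = 1) (hI : ∀ i, ‖eI i‖ = 1)
    (N Nneg : Fin nu → Finset I) (K : ℕ) (hK : ∀ u, (Nneg u).card = K)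
    (dmax : ℕ) (hdeg : ∀ u, (N u).card ≤ dmax) :
    ∑ u, ∑ i ∈ N u, ∑ j ∈ Nneg u,
        Real.log (Real.exp ⟪eU u, eI i⟫ + Real.exp ⟪eU u, eI j⟫)
      ≤ ((dmax : ℝ) / 2) * Real.log (2 * Real.exp 1 ^ 2 / (Real.exp 1 ^ 2 + 1))
          * (2 * K * nu - (∑ u, ∑ j ∈ Nneg u, ‖eU u - eI j‖ ^ 2) / 2)
        + (dmax : ℝ) * K * nu * Real.log (Real.exp 1 + 1 / Real.exp 1) := by
  set c : ℝ := Real.log (2 * Real.exp 1 ^ 2 / (Real.exp 1 ^ 2 + 1)) with hcdef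
  set L : ℝ := Real.log (Real.exp 1 + 1 / Real.exp 1) with hLdef
  have hbound : ∀ (u : Fin nu) (i : I), -1 ≤ ⟪eU u, eI i⟫ ∧ ⟪eU u, eI i⟫ ≤ 1 := by
    intro u i
    have h := abs_real_inner_le_norm (eU u) (eI i)
    rw [hU u, hI i, mul_one] at h
    exact abs_le.mp h
  -- per-term bound
  have hterm : ∀ (u : Fin nu) (i j : I),
      Real.log (Real.exp ⟪eU u, eI i⟫ + Real.exp ⟪eU u, eI j⟫)
        ≤ 1 / 2 * c * (⟪eU u, eI j⟫ + 1) + L := by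
    intro u i j
    exact chord_ineq (hbound u i).2 (hbound u j).1 (hbound u j).2
  have hc0 : 0 ≤ c := by
    rw [hcdef]
    apply Real.log_nonneg
    rw [le_div_iff₀ (by positivity)]
    nlinarith [Real.one_le_exp (zero_le_one), Real.exp_pos 1]
  have hL0 : 0 ≤ L := by
    rw [hLdef]
    apply Real.log_nonneg
    have h1 : (1:ℝ) ≤ Real.exp 1 := Real.one_le_exp zero_le_one
    have h2 : (0:ℝ) < 1 / Real.exp 1 := by positivity
    linarith
  set S : Fin nu → ℝ := fun u => ∑ j ∈ Nneg u, (1 / 2 * c * (⟪eU u, eI j⟫ + 1) + L)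
    with hSdef
  have hS0 : ∀ u, 0 ≤ S u := by
    intro u
    apply Finset.sum_nonneg
    intro j _
    have h1 := (hbound u j).1
    nlinarith
  have step1 : ∑ u, ∑ i ∈ N u, ∑ j ∈ Nneg u,
      Real.log (Real.exp ⟪eU u, eI i⟫ + Real.exp ⟪eU u, eI j⟫)
      ≤ ∑ u, (dmax : ℝ) * S u := by
    apply Finset.sum_le_sum
    intro u _
    calc ∑ i ∈ N u, ∑ j ∈ Nneg u,
          Real.log (Real.exp ⟪eU u, eI i⟫ + Real.exp ⟪eU u, eI j⟫)
        ≤ ∑ _i ∈ N u, S u := by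
          apply Finset.sum_le_sum
          intro i _
          apply Finset.sum_le_sum
          intro j _
          exact hterm u i j
      _ = ((N u).card : ℝ) * S u := by rw [Finset.sum_const, nsmul_eq_mul]
      _ ≤ (dmax : ℝ) * S u := by
          apply mul_le_mul_of_nonneg_right _ (hS0 u)
          exact_mod_cast hdeg u
  set T : ℝ := ∑ u, ∑ j ∈ Nneg u, ⟪eU u, eI j⟫ with hTdef
  have hSu : ∀ u : Fin nu, S u
      = 1 / 2 * c * (∑ j ∈ Nneg u, ⟪eU u, eI j⟫) + (K : ℝ) * (1 / 2 * c + L) := by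
    intro u
    rw [hSdef]
    simp only [mul_add, mul_one]
    rw [Finset.sum_add_distrib, Finset.sum_add_distrib, ← Finset.mul_sum,
      Finset.sum_const, Finset.sum_const, hK, nsmul_eq_mul, nsmul_eq_mul]
    ring
  have hSsum : ∑ u, (dmax : ℝ) * S u
      = (dmax : ℝ) * (1 / 2 * c * T + (nu : ℝ) * ((K : ℝ) * (1 / 2 * c + L))) := by
    rw [← Finset.mul_sum]
    congr 1
    calc ∑ u, S u = ∑ u, (1 / 2 * c * (∑ j ∈ Nneg u, ⟪eU u, eI j⟫)
          + (K : ℝ) * (1 / 2 * c + L)) := Finset.sum_congr rfl fun u _ => hSu u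
      _ = 1 / 2 * c * T + (nu : ℝ) * ((K : ℝ) * (1 / 2 * c + L)) := by
          rw [Finset.sum_add_distrib, ← Finset.mul_sum, Finset.sum_const,
            Finset.card_univ, Fintype.card_fin, nsmul_eq_mul, hTdef]
  have hnorm : ∀ (u : Fin nu) (j : I), ‖eU u - eI j‖ ^ 2 = 2 - 2 * ⟪eU u, eI j⟫ := by
    intro u j
    rw [norm_sub_sq_real, hU u, hI j]
    ring
  have hN2 : ∑ u, ∑ j ∈ Nneg u, ‖eU u - eI j‖ ^ 2
      = 2 * (K : ℝ) * (nu : ℝ) - 2 * T := by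
    calc ∑ u, ∑ j ∈ Nneg u, ‖eU u - eI j‖ ^ 2
        = ∑ u, ∑ j ∈ Nneg u, (2 - 2 * ⟪eU u, eI j⟫) :=
          Finset.sum_congr rfl fun u _ => Finset.sum_congr rfl fun j _ => hnorm u j
      _ = ∑ u, ((K : ℝ) * 2 - 2 * ∑ j ∈ Nneg u, ⟪eU u, eI j⟫) := by
          apply Finset.sum_congr rfl
          intro u _
          rw [Finset.sum_sub_distrib, Finset.sum_const, hK, nsmul_eq_mul,
            ← Finset.mul_sum]
      _ = 2 * (K : ℝ) * (nu : ℝ) - 2 * T := by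
          rw [Finset.sum_sub_distrib, Finset.sum_const, Finset.card_univ,
            Fintype.card_fin, nsmul_eq_mul, ← Finset.mul_sum, hTdef]
          ring
  refine le_trans step1 ?_
  rw [hSsum, hN2]
  apply le_of_eq
  ring
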